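/- For n ≥ 3, N(n;(3)) := Σ_{λ⊢n} f^{λ/(3)} = (1/6)(t_n + 2·t_{n−3}), where t_m is the number of involutions in S_m. -/

import Mathlib

open Finset

/-- `invol n` = number of involutions in the symmetric group `S_n` (permutations `σ` with `σ² = 1`). -/
noncomputable def invol (n : ℕ) : ℕ := Nat.card {σ : Equiv.Perm (Fin n) // σ * σ = 1}

/-- `skewSYT lam alp` = the number `f^{λ/α}` of standard Young tableaux of skew shape `λ/α`,
encoded as saturated chains of Young diagrams from `α` to `λ` adding one cell at a time
(zero if `α ⊄ λ`). -/
noncomputable def skewSYT (lam alp : YoungDiagram) : ℕ :=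
  Nat.card {f : Fin (lam.card - alp.card + 1) → YoungDiagram //
    f 0 = alp ∧ f (Fin.last _) = lam ∧
    ∀ i : Fin (lam.card - alp.card),
      f i.castSucc ≤ f i.succ ∧ (f i.succ).card = (f i.castSucc).card + 1}

/-- `NN n α = N(n;α) = Σ_{λ ⊢ n} f^{λ/α}`. -/
noncomputable def NN (n : ℕ) (alp : YoungDiagram) : ℕ :=
  ∑ᶠ lam ∈ {μ : YoungDiagram | μ.card = n}, skewSYT lam alp

/-- the single-row Young diagram with `k` cells -/
def rowYD (k : ℕ) : YoungDiagram := YoungDiagram.ofRowLens [k] (List.sortedGE_iff_pairwise.mpr (List.pairwise_singleton _ k))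


noncomputable section AuxYD

open scoped Classical

namespace YDAux

lemma cells_subset_box (μ : YoungDiagram) (n : ℕ) (h : μ.card ≤ n) :
    μ.cells ⊆ Finset.range n ×ˢ Finset.range n := by
  intro c hc
  obtain ⟨i, j⟩ := c
  rw [YoungDiagram.mem_cells] at hc
  have hrow : ({i} ×ˢ Finset.range (j+1) : Finset (ℕ × ℕ)) ⊆ μ.cells := by
    intro d hd
    obtain ⟨a, b⟩ := d
    simp only [Finset.mem_product, Finset.mem_singleton, Finset.mem_range] at hd
    rw [YoungDiagram.mem_cells]
    exact μ.up_left_mem (le_of_eq hd.1) (Nat.lt_succ_iff.mp hd.2) hc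
  have hcol : (Finset.range (i+1) ×ˢ {j} : Finset (ℕ × ℕ)) ⊆ μ.cells := by
    intro d hd
    obtain ⟨a, b⟩ := d
    simp only [Finset.mem_product, Finset.mem_singleton, Finset.mem_range] at hd
    rw [YoungDiagram.mem_cells]
    exact μ.up_left_mem (Nat.lt_succ_iff.mp hd.1) (le_of_eq hd.2) hc
  have h1 : j + 1 ≤ n := by
    calc j + 1 = ({i} ×ˢ Finset.range (j+1) : Finset (ℕ × ℕ)).card := by simp
    _ ≤ μ.cells.card := Finset.card_le_card hrow
    _ ≤ n := h
  have h2 : i + 1 ≤ n := by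
    calc i + 1 = (Finset.range (i+1) ×ˢ {j} : Finset (ℕ × ℕ)).card := by simp
    _ ≤ μ.cells.card := Finset.card_le_card hcol
    _ ≤ n := h
  simp only [Finset.mem_product, Finset.mem_range]
  omega

lemma cells_injective : Function.Injective (fun μ : YoungDiagram => μ.cells) := by
  intro μ ν h
  cases μ; cases ν; simpa using h

lemma finite_card_le (n : ℕ) : {μ : YoungDiagram | μ.card ≤ n}.Finite := by
  have hsub : {μ : YoungDiagram | μ.card ≤ n} ⊆
      (fun μ : YoungDiagram => μ.cells) ⁻¹' ↑((Finset.range n ×ˢ Finset.range n).powerset) := by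
    intro μ hμ
    rw [Set.mem_preimage, Finset.mem_coe, Finset.mem_powerset]
    exact cells_subset_box μ n hμ
  exact Set.Finite.subset (Set.Finite.preimage cells_injective.injOn (Finset.finite_toSet _)) hsub

/-- the finset of Young diagrams with exactly `n` cells -/
def All (n : ℕ) : Finset YoungDiagram :=
  (finite_card_le n).toFinset.filter (fun μ => μ.card = n)

@[simp] lemma mem_All {n : ℕ} {μ : YoungDiagram} : μ ∈ All n ↔ μ.card = n := by
  simp only [All, Finset.mem_filter, Set.Finite.mem_toFinset, Set.mem_setOf_eq,
    and_iff_right_iff_imp]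
  intro h; omega

/-- covering relation: `ν` is `μ` plus one cell -/
def Cov (μ ν : YoungDiagram) : Prop := μ ≤ ν ∧ ν.card = μ.card + 1

def above (μ : YoungDiagram) : Finset YoungDiagram :=
  (All (μ.card + 1)).filter (fun ν => Cov μ ν)

def below (μ : YoungDiagram) : Finset YoungDiagram :=
  (All (μ.card - 1)).filter (fun ρ => Cov ρ μ)

@[simp] lemma mem_above {μ ν : YoungDiagram} : ν ∈ above μ ↔ Cov μ ν := by
  simp only [above, Finset.mem_filter, mem_All, and_iff_right_iff_imp]
  intro h; exact h.2

@[simp] lemma mem_below {μ ρ : YoungDiagram} : ρ ∈ below μ ↔ Cov ρ μ := by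
  simp only [below, Finset.mem_filter, mem_All, and_iff_right_iff_imp]
  intro h; have := h.2; omega


lemma notmem_rowLen (μ : YoungDiagram) (i : ℕ) : (i, μ.rowLen i) ∉ μ := by
  rw [YoungDiagram.mem_iff_lt_rowLen]; omega

lemma rowLen_eq_of {μ : YoungDiagram} {i j : ℕ} (hmem : (i, j) ∈ μ) (hnot : (i, j+1) ∉ μ) :
    μ.rowLen i = j + 1 := by
  rw [YoungDiagram.mem_iff_lt_rowLen] at hmem hnot; omega

/-- add a cell at the end of row `i` -/
def addCell (μ : YoungDiagram) (i : ℕ) (h : i = 0 ∨ μ.rowLen i < μ.rowLen (i-1)) :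
    YoungDiagram :=
  ⟨insert (i, μ.rowLen i) μ.cells, by
    intro a b hba ha
    simp only [Finset.coe_insert, Set.mem_insert_iff, Finset.mem_coe,
      YoungDiagram.mem_cells] at ha ⊢
    obtain ⟨b1, b2⟩ := b
    obtain ⟨a1, a2⟩ := a
    obtain ⟨h1, h2⟩ := hba
    simp only at h1 h2
    rcases ha with ha | ha
    · rw [Prod.mk.injEq] at ha
      obtain ⟨rfl, rfl⟩ := ha
      rcases lt_or_eq_of_le h2 with h2 | h2
      · right
        exact μ.up_left_mem h1 (le_refl b2) (YoungDiagram.mem_iff_lt_rowLen.mpr h2)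
      · rcases lt_or_eq_of_le h1 with h1 | h1
        · right
          rcases h with h | h
          · omega
          · rw [YoungDiagram.mem_iff_lt_rowLen, h2]
            exact lt_of_lt_of_le h (μ.rowLen_anti _ _ (by omega))
        · left; rw [h1, h2]
    · right; exact μ.up_left_mem h1 h2 ha⟩

lemma mem_addCell {μ : YoungDiagram} {i : ℕ} {h} {c : ℕ × ℕ} :
    c ∈ addCell μ i h ↔ c = (i, μ.rowLen i) ∨ c ∈ μ := by
  rw [← YoungDiagram.mem_cells]
  show c ∈ insert (i, μ.rowLen i) μ.cells ↔ _
  simp [YoungDiagram.mem_cells]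

lemma cov_addCell (μ : YoungDiagram) (i : ℕ) (h) : Cov μ (addCell μ i h) := by
  constructor
  · rw [← YoungDiagram.cells_subset_iff]
    exact Finset.subset_insert _ _
  · show (insert (i, μ.rowLen i) μ.cells).card = _
    rw [Finset.card_insert_of_notMem (by simpa [YoungDiagram.mem_cells] using notmem_rowLen μ i)]

lemma addCell_injective {μ : YoungDiagram} {i i' : ℕ} {h h'}
    (he : addCell μ i h = addCell μ i' h') : i = i' := by
  by_contra hne
  have h1 : (i, μ.rowLen i) ∈ addCell μ i h := mem_addCell.mpr (Or.inl rfl)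
  rw [he] at h1
  rcases mem_addCell.mp h1 with h1 | h1
  · exact hne (congrArg Prod.fst h1)
  · exact notmem_rowLen μ i h1

/-- structure of a covering -/
lemma cov_struct {μ ν : YoungDiagram} (hc : Cov μ ν) :
    ∃ i, ∃ (h : i = 0 ∨ μ.rowLen i < μ.rowLen (i-1)), ν = addCell μ i h := by
  obtain ⟨hle, hcard⟩ := hc
  have hsub : μ.cells ⊆ ν.cells := YoungDiagram.cells_subset_iff.mpr hle
  have hdiff : (ν.cells \ μ.cells).card = 1 := by
    rw [Finset.card_sdiff_of_subset hsub]
    have h' : #ν.cells = #μ.cells + 1 := hcard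
    omega
  obtain ⟨c, hc1⟩ := Finset.card_eq_one.mp hdiff
  obtain ⟨i, j⟩ := c
  have hcν : (i, j) ∈ ν := by
    rw [← YoungDiagram.mem_cells]
    exact (Finset.mem_sdiff.mp (hc1 ▸ Finset.mem_singleton_self _)).1
  have hcμ : (i, j) ∉ μ := by
    rw [← YoungDiagram.mem_cells]
    exact (Finset.mem_sdiff.mp (hc1 ▸ Finset.mem_singleton_self _)).2
  have hcells : ν.cells = insert (i, j) μ.cells := by
    ext x
    constructor
    · intro hx
      by_cases hx' : x ∈ μ.cells
      · exact Finset.mem_insert.mpr (Or.inr hx')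
      · have : x ∈ ν.cells \ μ.cells := Finset.mem_sdiff.mpr ⟨hx, hx'⟩
        rw [hc1, Finset.mem_singleton] at this
        exact Finset.mem_insert.mpr (Or.inl this)
    · intro hx
      rcases Finset.mem_insert.mp hx with hx | hx
      · rw [hx, YoungDiagram.mem_cells]; exact hcν
      · exact hsub hx
  have hother : ∀ x : ℕ × ℕ, x ∈ ν → x ≠ (i, j) → x ∈ μ := by
    intro x hx hne
    have : x ∈ ν.cells := hx
    rw [hcells, Finset.mem_insert] at this
    rcases this with h | h
    · exact absurd h hne
    · exact h
  have hj2 : ∀ j' < j, (i, j') ∈ μ := by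
    intro j' hj'
    exact hother _ (ν.up_left_mem (le_refl i) (le_of_lt hj') hcν)
      (by simp only [ne_eq, Prod.mk.injEq, not_and]; omega)
  have hjrow : j = μ.rowLen i := by
    have hub : μ.rowLen i ≤ j := by
      by_contra hcon
      exact hcμ (YoungDiagram.mem_iff_lt_rowLen.mpr (by omega))
    rcases Nat.eq_zero_or_pos j with h0 | h0
    · omega
    · have := YoungDiagram.mem_iff_lt_rowLen.mp (hj2 (j-1) (by omega))
      omega
  have haddable : i = 0 ∨ μ.rowLen i < μ.rowLen (i-1) := by
    rcases Nat.eq_zero_or_pos i with h0 | h0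
    · exact Or.inl h0
    · right
      have : (i-1, j) ∈ μ := by
        refine hother _ (ν.up_left_mem (by omega) (le_refl j) hcν)
          (by simp only [ne_eq, Prod.mk.injEq, not_and]; omega)
      rw [YoungDiagram.mem_iff_lt_rowLen] at this
      omega
  refine ⟨i, haddable, ?_⟩
  apply cells_injective
  show ν.cells = (addCell μ i haddable).cells
  rw [hcells]
  show _ = insert (i, μ.rowLen i) μ.cells
  rw [hjrow]


/-- remove the last cell of row `i` (when removable) -/
def eraseCell (μ : YoungDiagram) (i : ℕ) (h : μ.rowLen (i+1) < μ.rowLen i) : YoungDiagram :=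
  ⟨μ.cells.erase (i, μ.rowLen i - 1), by
    intro a b hba ha
    simp only [Finset.coe_erase, Set.mem_diff, Finset.mem_coe, YoungDiagram.mem_cells,
      Set.mem_singleton_iff] at ha ⊢
    obtain ⟨ha, hane⟩ := ha
    obtain ⟨b1, b2⟩ := b
    obtain ⟨a1, a2⟩ := a
    obtain ⟨h1, h2⟩ := hba
    simp only at h1 h2
    refine ⟨μ.up_left_mem h1 h2 ha, ?_⟩
    intro hbeq
    rw [Prod.mk.injEq] at hbeq
    obtain ⟨hb1, hb2⟩ := hbeq
    have haa : a2 < μ.rowLen a1 := YoungDiagram.mem_iff_lt_rowLen.mp ha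
    have hanti : μ.rowLen a1 ≤ μ.rowLen b1 := μ.rowLen_anti _ _ h1
    rw [hb1] at hanti h1
    rw [hb2] at h2
    have ha2 : a2 = μ.rowLen i - 1 := by omega
    have ha1 : i < a1 := by
      rcases lt_or_eq_of_le h1 with h' | h'
      · exact h'
      · exfalso; apply hane; rw [Prod.mk.injEq]; omega
    have hend : μ.rowLen a1 ≤ μ.rowLen (i+1) := μ.rowLen_anti _ _ (by omega)
    omega⟩

lemma mem_eraseCell {μ : YoungDiagram} {i : ℕ} {h} {c : ℕ × ℕ} :
    c ∈ eraseCell μ i h ↔ c ≠ (i, μ.rowLen i - 1) ∧ c ∈ μ := by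
  rw [← YoungDiagram.mem_cells]
  show c ∈ Finset.erase _ _ ↔ _
  simp [YoungDiagram.mem_cells]

lemma corner_mem {μ : YoungDiagram} {i : ℕ} (h : μ.rowLen (i+1) < μ.rowLen i) :
    (i, μ.rowLen i - 1) ∈ μ := by
  rw [YoungDiagram.mem_iff_lt_rowLen]; omega

lemma cov_eraseCell (μ : YoungDiagram) (i : ℕ) (h) : Cov (eraseCell μ i h) μ := by
  constructor
  · rw [← YoungDiagram.cells_subset_iff]
    exact Finset.erase_subset _ _
  · show μ.cells.card = (μ.cells.erase (i, μ.rowLen i - 1)).card + 1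
    rw [Finset.card_erase_of_mem (by simpa [YoungDiagram.mem_cells] using corner_mem h)]
    have : 0 < μ.cells.card := Finset.card_pos.mpr ⟨_, (YoungDiagram.mem_cells _).mpr (corner_mem h)⟩
    omega

lemma eraseCell_injective {μ : YoungDiagram} {i i' : ℕ} {h h'}
    (he : eraseCell μ i h = eraseCell μ i' h') : i = i' := by
  by_contra hne
  have h1 : (i, μ.rowLen i - 1) ∈ eraseCell μ i' h' := by
    rw [mem_eraseCell]
    refine ⟨?_, corner_mem h⟩
    simp only [ne_eq, Prod.mk.injEq, not_and]
    intro hii; exact absurd hii hne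
  rw [← he, mem_eraseCell] at h1
  exact h1.1 rfl

/-- finsets of addable / removable row indices -/
def addableF (μ : YoungDiagram) : Finset ℕ :=
  (Finset.range (μ.colLen 0 + 1)).filter (fun i => i = 0 ∨ μ.rowLen i < μ.rowLen (i-1))

def removableF (μ : YoungDiagram) : Finset ℕ :=
  (Finset.range (μ.colLen 0)).filter (fun i => μ.rowLen (i+1) < μ.rowLen i)

lemma rowLen_pos_iff {μ : YoungDiagram} {i : ℕ} : 0 < μ.rowLen i ↔ i < μ.colLen 0 := by
  rw [← YoungDiagram.mem_iff_lt_rowLen, YoungDiagram.mem_iff_lt_colLen]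

lemma mem_addableF {μ : YoungDiagram} {i : ℕ} :
    i ∈ addableF μ ↔ (i = 0 ∨ μ.rowLen i < μ.rowLen (i-1)) := by
  simp only [addableF, Finset.mem_filter, Finset.mem_range, and_iff_right_iff_imp]
  intro h
  rcases h with h | h
  · omega
  · have : 0 < μ.rowLen (i-1) := by omega
    rw [rowLen_pos_iff] at this
    omega

lemma mem_removableF {μ : YoungDiagram} {i : ℕ} :
    i ∈ removableF μ ↔ μ.rowLen (i+1) < μ.rowLen i := by
  simp only [removableF, Finset.mem_filter, Finset.mem_range, and_iff_right_iff_imp]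
  intro h
  have : 0 < μ.rowLen i := by omega
  rwa [rowLen_pos_iff] at this

lemma addableF_card (μ : YoungDiagram) : (addableF μ).card = (removableF μ).card + 1 := by
  have h0 : 0 ∈ addableF μ := mem_addableF.mpr (Or.inl rfl)
  have hbij : (removableF μ).card = ((addableF μ).erase 0).card := by
    apply Finset.card_bij (fun i _ => i + 1)
    · intro a ha
      rw [mem_removableF] at ha
      rw [Finset.mem_erase]
      exact ⟨by omega, mem_addableF.mpr (Or.inr (by simpa using ha))⟩
    · intro a _ b _ hab; omega
    · intro b hb
      rw [Finset.mem_erase, mem_addableF] at hb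
      obtain ⟨hb0, hb⟩ := hb
      rcases hb with hb | hb
      · exact absurd hb hb0
      · refine ⟨b - 1, mem_removableF.mpr ?_, by omega⟩
        have hb' : b - 1 + 1 = b := by omega
        rw [hb']; exact hb
  rw [hbij, Finset.card_erase_of_mem h0]
  have : 0 < (addableF μ).card := Finset.card_pos.mpr ⟨0, h0⟩
  omega

lemma above_card_eq (μ : YoungDiagram) : (above μ).card = (addableF μ).card := by
  symm
  apply Finset.card_bij (fun i hi => addCell μ i (mem_addableF.mp hi))
  · intro a ha
    rw [mem_above]
    exact cov_addCell μ a _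
  · intro a ha b hb hab
    exact addCell_injective hab
  · intro ν hν
    obtain ⟨i, h, rfl⟩ := cov_struct (mem_above.mp hν)
    exact ⟨i, mem_addableF.mpr h, rfl⟩

lemma below_card_eq (μ : YoungDiagram) : (below μ).card = (removableF μ).card := by
  symm
  apply Finset.card_bij (fun i hi => eraseCell μ i (mem_removableF.mp hi))
  · intro a ha
    rw [mem_below]
    exact cov_eraseCell μ a _
  · intro a _ b _ hab
    exact eraseCell_injective hab
  · intro ρ hρ
    have hcov : Cov ρ μ := mem_below.mp hρ
    obtain ⟨i, h, hμ⟩ := cov_struct hcov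
    have hLnotρ : (i, ρ.rowLen i) ∉ ρ := notmem_rowLen ρ i
    have hLμ : (i, ρ.rowLen i) ∈ μ := by rw [hμ, mem_addCell]; exact Or.inl rfl
    have hL1 : (i, ρ.rowLen i + 1) ∉ μ := by
      rw [hμ, mem_addCell]
      rintro (hc | hc)
      · simp only [Prod.mk.injEq] at hc; omega
      · rw [YoungDiagram.mem_iff_lt_rowLen] at hc; omega
    have hrowμ : μ.rowLen i = ρ.rowLen i + 1 := rowLen_eq_of hLμ hL1
    have hrow1 : μ.rowLen (i+1) = ρ.rowLen (i+1) := by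
      have : ∀ j, (i+1, j) ∈ μ ↔ (i+1, j) ∈ ρ := by
        intro j
        rw [hμ, mem_addCell]
        constructor
        · rintro (hc | hc)
          · simp only [Prod.mk.injEq] at hc; omega
          · exact hc
        · exact fun hc => Or.inr hc
      rw [YoungDiagram.rowLen_eq_card, YoungDiagram.rowLen_eq_card]
      congr 1
      ext ⟨x, y⟩
      rw [YoungDiagram.mem_row_iff, YoungDiagram.mem_row_iff]
      constructor
      · rintro ⟨hc, rfl⟩
        exact ⟨(this y).mp hc, rfl⟩
      · rintro ⟨hc, rfl⟩
        exact ⟨(this y).mpr hc, rfl⟩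
    have hrem : μ.rowLen (i+1) < μ.rowLen i := by
      have : ρ.rowLen (i+1) ≤ ρ.rowLen i := ρ.rowLen_anti _ _ (by omega)
      omega
    refine ⟨i, mem_removableF.mpr hrem, ?_⟩
    apply cells_injective
    show (eraseCell μ i hrem).cells = ρ.cells
    show μ.cells.erase (i, μ.rowLen i - 1) = ρ.cells
    have : (i, μ.rowLen i - 1) = (i, ρ.rowLen i) := by rw [hrowμ]; simp
    rw [this, hμ]
    show (insert (i, ρ.rowLen i) ρ.cells).erase _ = ρ.cells
    rw [Finset.erase_insert (by simpa [YoungDiagram.mem_cells] using hLnotρ)]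

/-- the corner lemma : one more diagram above than below -/
lemma corner_count (μ : YoungDiagram) : (above μ).card = (below μ).card + 1 := by
  rw [above_card_eq, below_card_eq, addableF_card]


lemma card_mono {μ ν : YoungDiagram} (h : μ ≤ ν) : μ.card ≤ ν.card :=
  Finset.card_le_card (YoungDiagram.cells_subset_iff.mpr h)

lemma eq_of_le_of_card_le {μ ν : YoungDiagram} (h : μ ≤ ν) (hc : ν.card ≤ μ.card) : μ = ν :=
  cells_injective (Finset.eq_of_subset_of_card_le (YoungDiagram.cells_subset_iff.mpr h) hc)

lemma card_sup_add_card_inf (μ ν : YoungDiagram) :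
    (μ ⊔ ν).card + (μ ⊓ ν).card = μ.card + ν.card := by
  show (μ ⊔ ν).cells.card + (μ ⊓ ν).cells.card = _
  rw [YoungDiagram.cells_sup, YoungDiagram.cells_inf]
  exact Finset.card_union_add_card_inter _ _

/-- the key local counting identity -/
lemma count_key {ρ ν : YoungDiagram} (hcard : ν.card = ρ.card) :
    (above ρ ∩ above ν).card = (below ρ ∩ below ν).card + (if ν = ρ then 1 else 0) := by
  by_cases hne : ν = ρ
  · subst hne
    simp only [Finset.inter_self, if_pos rfl]
    exact corner_count ν
  · rw [if_neg hne, Nat.add_zero]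
    have hsup : ρ.card < (ρ ⊔ ν).card := by
      rcases lt_or_eq_of_le (card_mono (le_sup_left : ρ ≤ ρ ⊔ ν)) with h | h
      · exact h
      · exfalso
        have : ρ = ρ ⊔ ν := eq_of_le_of_card_le le_sup_left (le_of_eq h.symm)
        have hν : ν ≤ ρ := le_sup_right.trans (le_of_eq this.symm)
        exact hne (eq_of_le_of_card_le hν (by omega))
    have hinf : (ρ ⊓ ν).card < ρ.card := by
      rcases lt_or_eq_of_le (card_mono (inf_le_left : ρ ⊓ ν ≤ ρ)) with h | h
      · exact h
      · exfalso
        have : ρ ⊓ ν = ρ := eq_of_le_of_card_le inf_le_left (le_of_eq h.symm)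
        have hν : ρ ≤ ν := (le_of_eq this.symm).trans inf_le_right
        exact hne (eq_of_le_of_card_le hν (by omega)).symm
    have hsum := card_sup_add_card_inf ρ ν
    have habove : ∀ μ, μ ∈ above ρ ∩ above ν ↔
        ((ρ ⊔ ν).card = ρ.card + 1 ∧ μ = ρ ⊔ ν) := by
      intro μ
      rw [Finset.mem_inter, mem_above, mem_above]
      constructor
      · rintro ⟨⟨h1, h2⟩, ⟨h3, h4⟩⟩
        have hle : ρ ⊔ ν ≤ μ := sup_le h1 h3
        have : μ.card ≤ (ρ ⊔ ν).card := by omega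
        have heq : ρ ⊔ ν = μ := eq_of_le_of_card_le hle this
        constructor
        · have := card_mono hle; omega
        · exact heq.symm
      · rintro ⟨h1, rfl⟩
        exact ⟨⟨le_sup_left, h1⟩, ⟨le_sup_right, by omega⟩⟩
    have hbelow : ∀ σ, σ ∈ below ρ ∩ below ν ↔
        ((ρ ⊓ ν).card + 1 = ρ.card ∧ σ = ρ ⊓ ν) := by
      intro σ
      rw [Finset.mem_inter, mem_below, mem_below]
      constructor
      · rintro ⟨⟨h1, h2⟩, ⟨h3, h4⟩⟩
        have hle : σ ≤ ρ ⊓ ν := le_inf h1 h3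
        have : (ρ ⊓ ν).card ≤ σ.card := by omega
        have heq : σ = ρ ⊓ ν := eq_of_le_of_card_le hle this
        constructor
        · have := card_mono hle; omega
        · exact heq
      · rintro ⟨h1, rfl⟩
        exact ⟨⟨inf_le_left, by omega⟩, ⟨inf_le_right, by omega⟩⟩
    by_cases hc : (ρ ⊔ ν).card = ρ.card + 1
    · have e1 : above ρ ∩ above ν = {ρ ⊔ ν} := by
        ext μ; rw [habove, Finset.mem_singleton]
        constructor
        · rintro ⟨_, h⟩; exact h
        · rintro rfl; exact ⟨hc, rfl⟩
      have e2 : below ρ ∩ below ν = {ρ ⊓ ν} := by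
        ext σ; rw [hbelow, Finset.mem_singleton]
        constructor
        · rintro ⟨_, h⟩; exact h
        · rintro rfl; exact ⟨by omega, rfl⟩
      rw [e1, e2]; simp
    · have e1 : above ρ ∩ above ν = ∅ := by
        ext μ; rw [habove]; simp only [Finset.notMem_empty, iff_false]
        rintro ⟨h, _⟩; exact hc h
      have e2 : below ρ ∩ below ν = ∅ := by
        ext σ; rw [hbelow]; simp only [Finset.notMem_empty, iff_false]
        rintro ⟨h, _⟩; exact hc (by omega)
      rw [e1, e2]

/-- number of saturated chains of length `k` from `α` to `lam` -/
def cnt : ℕ → YoungDiagram → YoungDiagram → ℕ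
  | 0, α, lam => if lam = α then 1 else 0
  | (k+1), α, lam => ∑ ν ∈ below lam, cnt k α ν

lemma below_filter (ν : YoungDiagram) (m : ℕ) (hm : ν.card = m) :
    below ν = (All (m-1)).filter (fun σ => Cov σ ν) := by
  rw [below, hm]

lemma above_filter (σ : YoungDiagram) (m : ℕ) (hm : σ.card + 1 = m) :
    above σ = (All m).filter (fun ν => Cov σ ν) := by
  rw [above, hm]

lemma sum_pairs (m : ℕ) (hm : 1 ≤ m) (g : YoungDiagram → YoungDiagram → ℕ) :
    ∑ ν ∈ All m, ∑ σ ∈ below ν, g ν σ = ∑ σ ∈ All (m-1), ∑ ν ∈ above σ, g ν σ := by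
  have h1 : ∀ ν ∈ All m, ∑ σ ∈ below ν, g ν σ
      = ∑ σ ∈ All (m-1), if Cov σ ν then g ν σ else 0 := by
    intro ν hν
    rw [below_filter ν m (mem_All.mp hν), Finset.sum_filter]
  rw [Finset.sum_congr rfl h1, Finset.sum_comm]
  apply Finset.sum_congr rfl
  intro σ hσ
  rw [above_filter σ m (by have := mem_All.mp hσ; omega), Finset.sum_filter]

lemma below_card_zero {σ : YoungDiagram} (h : σ.card = 0) : below σ = ∅ := by
  ext ρ
  simp only [mem_below, Finset.notMem_empty, iff_false]
  rintro ⟨_, hc⟩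
  omega


lemma cnt_card : ∀ {k : ℕ} {α lam : YoungDiagram}, cnt k α lam ≠ 0 → lam.card = α.card + k := by
  intro k
  induction k with
  | zero =>
    intro α lam h
    by_cases he : lam = α
    · subst he; omega
    · simp only [cnt, if_neg he, ne_eq, not_true_eq_false] at h
  | succ k ih =>
    intro α lam h
    simp only [cnt] at h
    obtain ⟨ν, hν, hne⟩ := Finset.exists_ne_zero_of_sum_ne_zero h
    have h1 := ih hne
    have h2 := (mem_below.mp hν).2
    omega

lemma DUk : ∀ (k : ℕ) (α ρ : YoungDiagram),
    ∑ lam ∈ above ρ, cnt k α lam = (∑ β ∈ below α, cnt k β ρ) + k * cnt (k-1) α ρ := by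
  intro k
  induction k with
  | zero =>
    intro α ρ
    simp only [cnt, Nat.zero_mul, Nat.add_zero]
    rw [Finset.sum_ite_eq' (above ρ) α (fun _ => 1),
      Finset.sum_ite_eq (below α) ρ (fun _ => 1)]
    simp only [mem_above, mem_below]
  | succ k ih =>
    intro α ρ
    rw [Nat.add_sub_cancel]
    have e1 : ∀ lam ∈ above ρ, cnt (k+1) α lam
        = ∑ ν ∈ All ρ.card, if Cov ν lam then cnt k α ν else 0 := by
      intro lam hlam
      show (∑ ν ∈ below lam, cnt k α ν) = _
      rw [below_filter lam (ρ.card + 1) (mem_above.mp hlam).2, Nat.add_sub_cancel,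
        Finset.sum_filter]
    calc ∑ lam ∈ above ρ, cnt (k+1) α lam
        = ∑ lam ∈ above ρ, ∑ ν ∈ All ρ.card, if Cov ν lam then cnt k α ν else 0 :=
          Finset.sum_congr rfl e1
      _ = ∑ ν ∈ All ρ.card, ∑ lam ∈ above ρ, if Cov ν lam then cnt k α ν else 0 :=
          Finset.sum_comm
      _ = ∑ ν ∈ All ρ.card, (above ρ ∩ above ν).card * cnt k α ν := by
          apply Finset.sum_congr rfl
          intro ν _
          rw [← Finset.sum_filter]
          have h2 : (above ρ).filter (fun lam => Cov ν lam) = above ρ ∩ above ν := by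
            ext lam
            simp only [Finset.mem_filter, Finset.mem_inter, mem_above]
          rw [h2, Finset.sum_const, smul_eq_mul]
      _ = ∑ ν ∈ All ρ.card, ((below ρ ∩ below ν).card + if ν = ρ then 1 else 0) * cnt k α ν := by
          apply Finset.sum_congr rfl
          intro ν hν
          rw [count_key (mem_All.mp hν)]
      _ = (∑ ν ∈ All ρ.card, (below ρ ∩ below ν).card * cnt k α ν) + cnt k α ρ := by
          simp only [add_mul, Finset.sum_add_distrib]
          congr 1
          have h3 : ∀ ν ∈ All ρ.card,
              (if ν = ρ then 1 else 0) * cnt k α ν = if ν = ρ then cnt k α ν else 0 := by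
            intro ν _; split <;> simp
          rw [Finset.sum_congr rfl h3, Finset.sum_ite_eq' (All ρ.card) ρ]
          rw [if_pos (mem_All.mpr rfl)]
      _ = (∑ σ ∈ below ρ, ∑ ν ∈ All ρ.card, if Cov σ ν then cnt k α ν else 0) + cnt k α ρ := by
          congr 1
          have h4 : ∀ ν ∈ All ρ.card, (below ρ ∩ below ν).card * cnt k α ν
              = ∑ σ ∈ below ρ, if Cov σ ν then cnt k α ν else 0 := by
            intro ν _
            have h5 : below ρ ∩ below ν = (below ρ).filter (fun σ => Cov σ ν) := by
              ext σ
              simp only [Finset.mem_inter, Finset.mem_filter, mem_below]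
            rw [← Finset.sum_filter, ← h5, Finset.sum_const, smul_eq_mul]
          rw [Finset.sum_congr rfl h4, Finset.sum_comm]
      _ = (∑ σ ∈ below ρ, ∑ ν ∈ above σ, cnt k α ν) + cnt k α ρ := by
          congr 1
          apply Finset.sum_congr rfl
          intro σ hσ
          rw [above_filter σ ρ.card (by have := (mem_below.mp hσ).2; omega), Finset.sum_filter]
      _ = (∑ σ ∈ below ρ, ((∑ β ∈ below α, cnt k β σ) + k * cnt (k-1) α σ)) + cnt k α ρ := by
          congr 1
          exact Finset.sum_congr rfl (fun σ _ => ih α σ)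
      _ = (∑ β ∈ below α, cnt (k+1) β ρ) + (k+1) * cnt k α ρ := by
          rw [Finset.sum_add_distrib]
          have hA : ∑ σ ∈ below ρ, ∑ β ∈ below α, cnt k β σ
              = ∑ β ∈ below α, cnt (k+1) β ρ := by
            rw [Finset.sum_comm]
            rfl
          have hB : ∑ σ ∈ below ρ, k * cnt (k - 1) α σ = k * cnt k α ρ := by
            rw [← Finset.mul_sum]
            cases k with
            | zero => simp
            | succ k' =>
              congr 1
          rw [hA, hB]
          ring

/-- total number of chains of length `k` starting at `α` -/
def Ntot (k : ℕ) (α : YoungDiagram) : ℕ := ∑ lam ∈ All (α.card + k), cnt k α lam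

lemma Ntot_zero (α : YoungDiagram) : Ntot 0 α = 1 := by
  show (∑ lam ∈ All (α.card + 0), if lam = α then 1 else 0) = 1
  rw [Finset.sum_ite_eq' (All (α.card + 0)) α (fun _ => 1),
    if_pos (mem_All.mpr (by omega))]

lemma Ntot_succ (k : ℕ) (α : YoungDiagram) :
    Ntot (k+1) α = Ntot k α + (∑ β ∈ below α, Ntot k β) + k * Ntot (k-1) α := by
  have step1 : Ntot (k+1) α = ∑ σ ∈ All (α.card + k), ∑ lam ∈ above σ, cnt k α σ := by
    show (∑ lam ∈ All (α.card + (k+1)), ∑ ν ∈ below lam, cnt k α ν) = _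
    have := sum_pairs (α.card + k + 1) (by omega) (fun lam ν => cnt k α ν)
    rw [show α.card + (k+1) = α.card + k + 1 by omega, this, Nat.add_sub_cancel]
  rw [step1]
  have step2 : ∀ σ ∈ All (α.card + k), ∑ lam ∈ above σ, cnt k α σ
      = cnt k α σ + (below σ).card * cnt k α σ := by
    intro σ _
    rw [Finset.sum_const, smul_eq_mul, corner_count]
    ring
  rw [Finset.sum_congr rfl step2, Finset.sum_add_distrib]
  have hN : ∑ σ ∈ All (α.card + k), cnt k α σ = Ntot k α := rfl
  rw [hN, Nat.add_assoc]
  congr 1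
  -- remaining : ∑ σ ∈ All (α.card + k), (below σ).card * cnt k α σ
  --   = (∑ β ∈ below α, Ntot k β) + k * Ntot (k-1) α
  by_cases hck : α.card + k = 0
  · have hα : α.card = 0 := by omega
    have hk : k = 0 := by omega
    subst hk
    have hz : ∀ σ ∈ All (α.card + 0), (below σ).card * cnt 0 α σ = 0 := by
      intro σ hσ
      rw [below_card_zero (by have := mem_All.mp hσ; omega)]
      simp
    rw [Finset.sum_congr rfl hz, Finset.sum_const_zero, below_card_zero hα]
    simp
  · have step3 : ∀ σ ∈ All (α.card + k), (below σ).card * cnt k α σ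
        = ∑ τ ∈ below σ, cnt k α σ := by
      intro σ _
      rw [Finset.sum_const, smul_eq_mul]
    rw [Finset.sum_congr rfl step3,
      sum_pairs (α.card + k) (by omega) (fun σ τ => cnt k α σ)]
    have step4 : ∀ τ ∈ All (α.card + k - 1), ∑ σ ∈ above τ, cnt k α σ
        = (∑ β ∈ below α, cnt k β τ) + k * cnt (k-1) α τ := fun τ _ => DUk k α τ
    rw [Finset.sum_congr rfl step4, Finset.sum_add_distrib, Finset.sum_comm]
    congr 1
    · -- ∑ β ∈ below α, ∑ τ ∈ All (α.card + k - 1), cnt k β τ = ∑ β ∈ below α, Ntot k β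
      apply Finset.sum_congr rfl
      intro β hβ
      have hc : α.card = β.card + 1 := (mem_below.mp hβ).2
      show (∑ τ ∈ All (α.card + k - 1), cnt k β τ) = ∑ lam ∈ All (β.card + k), cnt k β lam
      have he : α.card + k - 1 = β.card + k := by omega
      rw [he]
    · -- ∑ τ, k * cnt (k-1) α τ = k * Ntot (k-1) α
      rw [← Finset.mul_sum]
      cases k with
      | zero => simp
      | succ k' => congr 1


end YDAux
end AuxYD

namespace YDAux
noncomputable section
open scoped Classical

lemma mem_rowYD {k : ℕ} {c : ℕ × ℕ} : c ∈ rowYD k ↔ c.1 = 0 ∧ c.2 < k := by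
  rw [rowYD, YoungDiagram.mem_ofRowLens]
  constructor
  · rintro ⟨h1, h2⟩
    simp only [List.length_singleton] at h1
    constructor
    · omega
    · simpa using h2
  · rintro ⟨h1, h2⟩
    refine ⟨by simp [h1], ?_⟩
    simpa using h2

lemma rowYD_card (k : ℕ) : (rowYD k).card = k := by
  have : (rowYD k).cells = {0} ×ˢ Finset.range k := by
    ext ⟨i, j⟩
    rw [YoungDiagram.mem_cells, mem_rowYD]
    simp only [Finset.mem_product, Finset.mem_singleton, Finset.mem_range]
  show (rowYD k).cells.card = k
  rw [this]
  simp only [Finset.card_product, Finset.card_singleton, Finset.card_range, Nat.one_mul]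

lemma rowYD_zero_card : (rowYD 0).card = 0 := rowYD_card 0

lemma below_rowYD (a : ℕ) : below (rowYD (a+1)) = {rowYD a} := by
  ext ρ
  rw [mem_below, Finset.mem_singleton]
  constructor
  · rintro ⟨hle, hcard⟩
    rw [rowYD_card] at hcard
    have hρcard : ρ.card = a := by omega
    have hfst : ∀ c : ℕ × ℕ, c ∈ ρ → c.1 = 0 := by
      intro c hc
      exact (mem_rowYD.mp (hle hc)).1
    have hrow : ρ.cells = ρ.row 0 := by
      ext c
      rw [YoungDiagram.mem_row_iff]
      constructor
      · intro hc; exact ⟨hc, hfst c hc⟩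
      · rintro ⟨hc, _⟩; exact hc
    have hlen : ρ.rowLen 0 = a := by
      rw [YoungDiagram.rowLen_eq_card, ← hrow]
      exact hρcard
    apply cells_injective
    show ρ.cells = (rowYD a).cells
    ext ⟨i, j⟩
    rw [YoungDiagram.mem_cells, YoungDiagram.mem_cells, mem_rowYD]
    constructor
    · intro hc
      have h0 : i = 0 := hfst _ hc
      subst h0
      rw [YoungDiagram.mem_iff_lt_rowLen, hlen] at hc
      exact ⟨rfl, hc⟩
    · rintro ⟨h0, hj⟩
      simp only at h0
      subst h0
      rw [YoungDiagram.mem_iff_lt_rowLen, hlen]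
      exact hj
  · rintro rfl
    constructor
    · rw [← YoungDiagram.cells_subset_iff]
      intro c hc
      rw [YoungDiagram.mem_cells, mem_rowYD] at hc ⊢
      omega
    · rw [rowYD_card, rowYD_card]

lemma rowYD_one_below : below (rowYD 1) = {rowYD 0} := below_rowYD 0

lemma below_rowYD_zero : below (rowYD 0) = ∅ := below_card_zero rowYD_zero_card


/-- chains of Young diagrams of length `k` -/
def ChainT (k : ℕ) (α lam : YoungDiagram) : Type :=
  {f : Fin (k + 1) → YoungDiagram //
    f 0 = α ∧ f (Fin.last _) = lam ∧
    ∀ i : Fin k, f i.castSucc ≤ f i.succ ∧ (f i.succ).card = (f i.castSucc).card + 1}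

lemma skewSYT_eq (lam alp : YoungDiagram) :
    skewSYT lam alp = Nat.card (ChainT (lam.card - alp.card) alp lam) := rfl

lemma chain_card {k : ℕ} {α : YoungDiagram} (f : Fin (k+1) → YoungDiagram)
    (h0 : f 0 = α)
    (hc : ∀ i : Fin k, f i.castSucc ≤ f i.succ ∧ (f i.succ).card = (f i.castSucc).card + 1) :
    ∀ i : Fin (k+1), (f i).card = α.card + i.val := by
  intro i
  induction i using Fin.induction with
  | zero => rw [h0]; simp
  | succ j ih =>
    rw [(hc j).2, ih]
    simp only [Fin.val_succ, Fin.coe_castSucc]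
    ring

instance finite_ChainT (k : ℕ) (α lam : YoungDiagram) : Finite (ChainT k α lam) := by
  have hbox : ∀ (f : ChainT k α lam) (i : Fin (k+1)),
      f.1 i ∈ {μ : YoungDiagram | μ.card ≤ α.card + k} := by
    rintro ⟨f, h0, hl, hc⟩ i
    have := chain_card f h0 hc i
    simp only [Set.mem_setOf_eq]
    have : (f i).card = α.card + i.val := this
    have hik : i.val ≤ k := Fin.is_le i
    omega
  have : Finite ↥{μ : YoungDiagram | μ.card ≤ α.card + k} := (finite_card_le _).to_subtype
  apply Finite.of_injective
    (fun f : ChainT k α lam =>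
      (fun i => (⟨f.1 i, hbox f i⟩ : ↥{μ : YoungDiagram | μ.card ≤ α.card + k})))
  intro f g hfg
  apply Subtype.ext
  funext i
  have := congrFun hfg i
  exact congrArg Subtype.val this

/-- peeling off the last step of a chain -/
def chainEquiv (k : ℕ) (α lam : YoungDiagram) :
    ChainT (k+1) α lam ≃ (ν : ↥(below lam)) × ChainT k α ↑ν where
  toFun f :=
    ⟨⟨f.1 (Fin.castSucc (Fin.last k)), by
        rw [mem_below]
        constructor
        · have h := (f.2.2.2 (Fin.last k)).1
          rwa [Fin.succ_last, f.2.2.1] at h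
        · have h := (f.2.2.2 (Fin.last k)).2
          rwa [Fin.succ_last, f.2.2.1] at h⟩,
      ⟨fun j => f.1 j.castSucc, by
        refine ⟨?_, rfl, ?_⟩
        · show f.1 (Fin.castSucc 0) = α
          rw [Fin.castSucc_zero]
          exact f.2.1
        · intro i
          have h := f.2.2.2 i.castSucc
          rw [Fin.succ_castSucc] at h
          exact h⟩⟩
  invFun := fun ⟨⟨ν, hν⟩, ⟨g, hg0, hgl, hgc⟩⟩ =>
    ⟨Fin.snoc g lam, by
      refine ⟨?_, ?_, ?_⟩
      · show (Fin.snoc g lam : Fin (k+2) → YoungDiagram) 0 = α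
        rw [show (0 : Fin (k+2)) = Fin.castSucc 0 from rfl, Fin.snoc_castSucc]
        exact hg0
      · exact Fin.snoc_last _ _
      · intro i
        refine Fin.lastCases ?_ ?_ i
        · rw [Fin.succ_last, Fin.snoc_last, Fin.snoc_castSucc, hgl]
          exact (mem_below.mp hν : Cov ν lam)
        · intro j
          rw [Fin.succ_castSucc, Fin.snoc_castSucc, Fin.snoc_castSucc]
          exact hgc j⟩
  left_inv := by
    rintro ⟨f, hf0, hfl, hfc⟩
    apply Subtype.ext
    show (Fin.snoc (fun j => f j.castSucc) lam : Fin (k+2) → YoungDiagram) = f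
    funext i
    refine Fin.lastCases ?_ ?_ i
    · rw [Fin.snoc_last, hfl]
    · intro j
      rw [Fin.snoc_castSucc]
  right_inv := by
    rintro ⟨⟨ν, hν⟩, g, hg0, hgl, hgc⟩
    have hval : (Fin.snoc g lam : Fin (k+2) → YoungDiagram) (Fin.castSucc (Fin.last k)) = ν := by
      rw [Fin.snoc_castSucc]; exact hgl
    refine Sigma.ext (Subtype.ext hval) ?_
    refine (Subtype.heq_iff_coe_eq ?_).mpr ?_
    · intro x
      dsimp only
      rw [Fin.snoc_castSucc, hgl]
    · funext j
      show (Fin.snoc g lam : Fin (k+2) → YoungDiagram) (Fin.castSucc j) = g j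
      exact Fin.snoc_castSucc _ _ _

lemma natCard_ChainT : ∀ (k : ℕ) (α lam : YoungDiagram),
    Nat.card (ChainT k α lam) = cnt k α lam := by
  intro k
  induction k with
  | zero =>
    intro α lam
    show _ = if lam = α then 1 else 0
    by_cases h : lam = α
    · subst h
      rw [if_pos rfl]
      rw [Nat.card_eq_one_iff_unique]
      constructor
      · constructor
        rintro ⟨f, hf0, _, _⟩ ⟨g, hg0, _, _⟩
        apply Subtype.ext
        funext i
        have hi : i = 0 := Fin.fin_one_eq_zero i
        rw [hi]
        show f 0 = g 0
        rw [hf0, hg0]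
      · exact ⟨⟨fun _ => lam, rfl, rfl, fun i => i.elim0⟩⟩
    · rw [if_neg h]
      have : IsEmpty (ChainT 0 α lam) := by
        constructor
        rintro ⟨f, hf0, hfl, _⟩
        apply h
        rw [← hfl]
        show f (Fin.last 0) = α
        rw [show (Fin.last 0) = 0 from rfl, hf0]
      exact Nat.card_of_isEmpty
  | succ k ih =>
    intro α lam
    rw [Nat.card_congr (chainEquiv k α lam)]
    letI : ∀ ν : ↥(below lam), Fintype (ChainT k α ↑ν) := fun ν => Fintype.ofFinite _
    rw [Nat.card_eq_fintype_card, Fintype.card_sigma]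
    show (∑ ν : ↥(below lam), Fintype.card (ChainT k α ↑ν)) = ∑ ν ∈ below lam, cnt k α ν
    rw [← Finset.sum_coe_sort (below lam) (fun ν => cnt k α ν)]
    apply Finset.sum_congr rfl
    intro ν _
    rw [← Nat.card_eq_fintype_card, ih]

lemma NN_eq_Ntot (n : ℕ) (α : YoungDiagram) (h : α.card ≤ n) :
    NN n α = Ntot (n - α.card) α := by
  rw [NN, show {μ : YoungDiagram | μ.card = n} = ↑(All n) from by ext μ; simp [mem_All],
    finsum_mem_coe_finset]
  rw [Ntot, show α.card + (n - α.card) = n from by omega]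
  apply Finset.sum_congr rfl
  intro lam hlam
  rw [skewSYT_eq, natCard_ChainT]
  congr 1
  rw [mem_All.mp hlam]


end
end YDAux

section InvolAux
open Equiv

namespace InvolAux

lemma optionCongr_mul {α : Type*} (e₁ e₂ : Equiv.Perm α) :
    (e₁ * e₂).optionCongr = e₁.optionCongr * e₂.optionCongr := by
  ext x
  cases x <;> simp [Equiv.Perm.mul_apply]

lemma optionCongr_removeNone {α : Type*} [DecidableEq α] (σ : Equiv.Perm (Option α))
    (h : σ none = none) : (removeNone σ).optionCongr = σ := by
  rw [map_equiv_removeNone, h, Equiv.swap_self]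
  ext x
  simp [Equiv.Perm.mul_apply]

/-- fiber over `none` -/
def fixEquiv (α : Type*) [DecidableEq α] :
    {σ : Equiv.Perm (Option α) // σ * σ = 1 ∧ σ none = none} ≃
      {e : Equiv.Perm α // e * e = 1} where
  toFun σ := ⟨removeNone σ.1, by
    apply Equiv.optionCongr_injective
    rw [optionCongr_mul, optionCongr_removeNone _ σ.2.2, σ.2.1]
    simp⟩
  invFun e := ⟨e.1.optionCongr, by
    constructor
    · rw [← optionCongr_mul, e.2]; simp
    · simp⟩
  left_inv σ := Subtype.ext (optionCongr_removeNone _ σ.2.2)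
  right_inv e := Subtype.ext (removeNone_optionCongr e.1)

variable {α : Type*} [DecidableEq α] (a : α)

/-- fiber over `some a` -/
def someEquiv :
    {σ : Equiv.Perm (Option α) // σ * σ = 1 ∧ σ none = some a} ≃
      {e : Equiv.Perm α // e * e = 1 ∧ e a = a} where
  toFun := fun ⟨σ, hσ1, hσ2⟩ => by
    refine ⟨removeNone (Equiv.swap none (some a) * σ), ?_, ?_⟩
    · have hsa : σ (some a) = none := by
        have : σ (σ none) = none := by
          have := Equiv.ext_iff.mp hσ1 none
          simpa [Equiv.Perm.mul_apply] using this
        rwa [hσ2] at this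
      have hτ : (Equiv.swap none (some a) * σ) none = none := by
        simp [Equiv.Perm.mul_apply, hσ2]
      -- (w σ)² = 1 pointwise : σ w σ = w
      have hkey : σ * (Equiv.swap none (some a)) * σ = Equiv.swap none (some a) := by
        ext x
        have hsq : ∀ y, σ (σ y) = y := by
          intro y
          have := Equiv.ext_iff.mp hσ1 y
          simpa [Equiv.Perm.mul_apply] using this
        rcases em (x = none) with rfl | hx
        · simp [Equiv.Perm.mul_apply, hσ2, hsa]
        rcases em (x = some a) with rfl | hx2
        · simp [Equiv.Perm.mul_apply, hσ2, hsa]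
        · have h1 : σ x ≠ none := by
            intro hc
            apply hx2
            have h' := hsq x
            rw [hc, hσ2] at h'
            exact h'.symm
          have h2 : σ x ≠ some a := by
            intro hc
            apply hx
            have h' := hsq x
            rw [hc, hsa] at h'
            exact h'.symm
          simp only [Equiv.Perm.mul_apply]
          rw [Equiv.swap_apply_of_ne_of_ne hx hx2,
            Equiv.swap_apply_of_ne_of_ne h1 h2, hsq]
      apply Equiv.optionCongr_injective
      rw [optionCongr_mul, optionCongr_removeNone _ hτ]
      show Equiv.swap none (some a) * σ * (Equiv.swap none (some a) * σ) = Equiv.optionCongr 1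
      have : Equiv.swap none (some a) * σ * (Equiv.swap none (some a) * σ)
          = Equiv.swap none (some a) * (σ * Equiv.swap none (some a) * σ) := by
        group
      rw [this, hkey]
      simp
    · -- e a = a
      have hsa : σ (some a) = none := by
        have : σ (σ none) = none := by
          have := Equiv.ext_iff.mp hσ1 none
          simpa [Equiv.Perm.mul_apply] using this
        rwa [hσ2] at this
      have hτ : (Equiv.swap none (some a) * σ) none = none := by
        simp [Equiv.Perm.mul_apply, hσ2]
      have : (removeNone (Equiv.swap none (some a) * σ)).optionCongr (some a) = some a := by
        rw [optionCongr_removeNone _ hτ]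
        simp [Equiv.Perm.mul_apply, hsa]
      simp only [Equiv.optionCongr_apply, Option.map_some, Option.some.injEq] at this
      exact this
  invFun := fun ⟨e, he1, he2⟩ => by
    refine ⟨Equiv.swap none (some a) * e.optionCongr, ?_, ?_⟩
    · -- commuting argument
      have hcomm : e.optionCongr * Equiv.swap none (some a)
          = Equiv.swap none (some a) * e.optionCongr := by
        ext x
        rcases em (x = none) with rfl | hx
        · simp [Equiv.Perm.mul_apply, he2]
        rcases em (x = some a) with rfl | hx2
        · simp [Equiv.Perm.mul_apply, he2]
        · have h1 : e.optionCongr x ≠ none := by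
            cases x with
            | none => exact absurd rfl hx
            | some b => simp
          have h2 : e.optionCongr x ≠ some a := by
            cases x with
            | none => exact absurd rfl hx
            | some b =>
              simp only [Equiv.optionCongr_apply, Option.map_some, ne_eq, Option.some.injEq]
              intro hc
              apply hx2
              have : b = a := by
                have := e.injective (hc.trans he2.symm)
                exact this
              rw [this]
          rw [Equiv.Perm.mul_apply, Equiv.Perm.mul_apply,
            Equiv.swap_apply_of_ne_of_ne hx hx2, Equiv.swap_apply_of_ne_of_ne h1 h2]
      have : Equiv.swap none (some a) * e.optionCongr * (Equiv.swap none (some a) * e.optionCongr)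
          = Equiv.swap none (some a) * (e.optionCongr * Equiv.swap none (some a)) * e.optionCongr := by
        group
      rw [this, hcomm]
      have : Equiv.swap none (some a) * (Equiv.swap none (some a) * e.optionCongr) * e.optionCongr
          = (Equiv.swap none (some a) * Equiv.swap none (some a)) * (e.optionCongr * e.optionCongr) := by
        group
      rw [this, Equiv.swap_mul_self, ← optionCongr_mul, he1]
      simp
    · simp [Equiv.Perm.mul_apply]
  left_inv := fun ⟨σ, hσ1, hσ2⟩ => by
    apply Subtype.ext
    show Equiv.swap none (some a) * (removeNone (Equiv.swap none (some a) * σ)).optionCongr = σ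
    have hτ : (Equiv.swap none (some a) * σ) none = none := by
      simp [Equiv.Perm.mul_apply, hσ2]
    rw [optionCongr_removeNone _ hτ, ← mul_assoc, Equiv.swap_mul_self, one_mul]
  right_inv := fun ⟨e, he1, he2⟩ => by
    apply Subtype.ext
    show removeNone (Equiv.swap none (some a) * (Equiv.swap none (some a) * e.optionCongr)) = e
    rw [← mul_assoc, Equiv.swap_mul_self, one_mul, removeNone_optionCongr]

/-- transport of the involution condition along an equivalence -/
lemma permCongr_mul {β γ : Type*} (φ : β ≃ γ) (σ τ : Equiv.Perm β) :
    φ.permCongr (σ * τ) = φ.permCongr σ * φ.permCongr τ := by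
  ext x
  simp [Equiv.permCongr_apply, Equiv.Perm.mul_apply]

lemma card_invol_congr {β γ : Type*} (φ : β ≃ γ) :
    Nat.card {σ : Equiv.Perm β // σ * σ = 1} = Nat.card {σ : Equiv.Perm γ // σ * σ = 1} := by
  apply Nat.card_congr
  refine φ.permCongr.subtypeEquiv ?_
  intro σ
  constructor
  · intro h
    rw [← permCongr_mul, h]
    ext x
    simp [Equiv.permCongr_apply]
  · intro h
    apply φ.permCongr.injective
    rw [permCongr_mul, h]
    ext x
    simp [Equiv.permCongr_apply]

open scoped Classical

lemma card_subtype_filter {β : Type*} [Fintype β] (p : β → Prop) :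
    Nat.card {x // p x} = (Finset.univ.filter p).card := by
  simp [Nat.card_eq_fintype_card, Fintype.card_subtype]

def fixEquivCongr {β γ : Type*} (φ : β ≃ γ) (b : β) :
    {e : Equiv.Perm β // e * e = 1 ∧ e b = b} ≃
      {τ : Equiv.Perm γ // τ * τ = 1 ∧ τ (φ b) = φ b} :=
  φ.permCongr.subtypeEquiv (fun σ => by
    constructor
    · rintro ⟨h1, h2⟩
      constructor
      · rw [← permCongr_mul, h1]
        ext x
        simp [Equiv.permCongr_apply]
      · simp [Equiv.permCongr_apply, h2]
    · rintro ⟨h1, h2⟩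
      constructor
      · apply φ.permCongr.injective
        rw [permCongr_mul, h1]
        ext x
        simp [Equiv.permCongr_apply]
      · apply φ.injective
        simpa [Equiv.permCongr_apply] using h2)

lemma invol_rec (n : ℕ) : invol (n+2) = invol (n+1) + (n+1) * invol n := by
  have h1 : invol (n+2) = Nat.card {σ : Equiv.Perm (Option (Fin (n+1))) // σ * σ = 1} :=
    card_invol_congr (finSuccEquiv (n+1))
  rw [h1]
  have split : Nat.card {σ : Equiv.Perm (Option (Fin (n+1))) // σ * σ = 1}
      = Nat.card {σ : Equiv.Perm (Option (Fin (n+1))) // σ * σ = 1 ∧ σ none = none}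
        + ∑ a : Fin (n+1),
            Nat.card {σ : Equiv.Perm (Option (Fin (n+1))) // σ * σ = 1 ∧ σ none = some a} := by
    rw [card_subtype_filter]
    rw [Finset.card_eq_sum_card_fiberwise
      (f := fun σ : Equiv.Perm (Option (Fin (n+1))) => σ none)
      (t := (Finset.univ : Finset (Option (Fin (n+1))))) (fun x _ => Finset.mem_univ _)]
    rw [Fintype.sum_option]
    congr 1
    · rw [Finset.filter_filter, card_subtype_filter]
      congr!
    · apply Finset.sum_congr rfl
      intro a _
      rw [Finset.filter_filter, card_subtype_filter]
      congr!
  rw [split]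
  congr 1
  · exact Nat.card_congr (fixEquiv (Fin (n+1)))
  · have each : ∀ a : Fin (n+1),
        Nat.card {σ : Equiv.Perm (Option (Fin (n+1))) // σ * σ = 1 ∧ σ none = some a}
          = invol n := by
      intro a
      rw [Nat.card_congr (someEquiv a), Nat.card_congr (fixEquivCongr (finSuccEquiv' a) a)]
      have hat : (finSuccEquiv' a) a = none := finSuccEquiv'_at a
      rw [Nat.card_congr (Equiv.subtypeEquivRight (q := fun τ : Equiv.Perm (Option (Fin n)) =>
        τ * τ = 1 ∧ τ none = none) (fun τ => by rw [hat]))]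
      rw [Nat.card_congr (fixEquiv (Fin n))]
      rfl
    rw [Finset.sum_congr rfl (fun a _ => each a), Finset.sum_const, Finset.card_univ,
      Fintype.card_fin, smul_eq_mul]

lemma invol_zero : invol 0 = 1 := by
  rw [invol, Nat.card_eq_one_iff_unique]
  constructor
  · constructor
    rintro ⟨f, _⟩ ⟨g, _⟩
    apply Subtype.ext
    ext x
    exact x.elim0
  · exact ⟨1, one_mul 1⟩

lemma invol_one : invol 1 = 1 := by
  rw [invol, Nat.card_eq_one_iff_unique]
  constructor
  · constructor
    rintro ⟨f, _⟩ ⟨g, _⟩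
    exact Subtype.ext (Subsingleton.elim _ _)
  · exact ⟨1, one_mul 1⟩

end InvolAux
end InvolAux

section Final
open YDAux InvolAux

private lemma L0 (k : ℕ) : Ntot k (rowYD 0) = invol k := by
  induction k using Nat.strong_induction_on with
  | _ k ih =>
    match k with
    | 0 => rw [Ntot_zero, invol_zero]
    | 1 =>
      rw [Ntot_succ, Ntot_zero, below_rowYD_zero]
      simp [invol_one]
    | (k+2) =>
      rw [Ntot_succ (k+1), below_rowYD_zero]
      simp only [Finset.sum_empty, Nat.add_sub_cancel, Nat.add_zero]
      rw [ih (k+1) (by omega), ih k (by omega), invol_rec k]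

private lemma L1 (k : ℕ) : Ntot k (rowYD 1) = invol (k+1) := by
  induction k using Nat.strong_induction_on with
  | _ k ih =>
    match k with
    | 0 => rw [Ntot_zero, invol_one]
    | 1 =>
      rw [Ntot_succ, below_rowYD 0, Finset.sum_singleton, Ntot_zero, Ntot_zero]
      have h2 := invol_rec 0
      rw [invol_one, invol_zero] at h2
      norm_num at h2 ⊢
      omega
    | (k+2) =>
      rw [Ntot_succ (k+1), below_rowYD 0, Finset.sum_singleton]
      simp only [Nat.add_sub_cancel]
      rw [ih (k+1) (by omega), ih k (by omega), L0 (k+1), invol_rec (k+1)]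
      ring

private lemma L2 (k : ℕ) : 2 * Ntot k (rowYD 2) = invol (k+2) := by
  induction k using Nat.strong_induction_on with
  | _ k ih =>
    match k with
    | 0 =>
      rw [Ntot_zero]
      have h2 := invol_rec 0
      rw [invol_one, invol_zero] at h2
      norm_num at h2 ⊢
      omega
    | 1 =>
      rw [Ntot_succ, below_rowYD 1, Finset.sum_singleton, Ntot_zero, Ntot_zero]
      have h2 := invol_rec 0
      have h3 := invol_rec 1
      rw [invol_one, invol_zero] at h2
      rw [invol_one] at h3
      norm_num at h2 h3 ⊢
      omega
    | (k+2) =>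
      rw [Ntot_succ (k+1), below_rowYD 1, Finset.sum_singleton]
      simp only [Nat.add_sub_cancel]
      have hA := ih (k+1) (by omega)
      have hB := L1 (k+1)
      have hC := ih k (by omega)
      have hr := invol_rec (k+2)
      zify at hA hB hC hr ⊢
      linear_combination hA + 2*hB + (k+1)*hC - hr

private lemma L3 (k : ℕ) : 6 * Ntot k (rowYD 3) = invol (k+3) + 2 * invol k := by
  induction k using Nat.strong_induction_on with
  | _ k ih =>
    match k with
    | 0 =>
      rw [Ntot_zero, invol_zero]
      have h2 := invol_rec 0
      have h3 := invol_rec 1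
      rw [invol_one, invol_zero] at h2
      rw [invol_one] at h3
      norm_num at h2 h3 ⊢
      omega
    | 1 =>
      rw [Ntot_succ, below_rowYD 2, Finset.sum_singleton, Ntot_zero, Ntot_zero]
      have h2 := invol_rec 0
      have h3 := invol_rec 1
      have h4 := invol_rec 2
      rw [invol_one, invol_zero] at h2
      rw [invol_one] at h3
      have i1 := invol_one
      norm_num at h2 h3 h4 ⊢
      omega
    | (k+2) =>
      rw [Ntot_succ (k+1), below_rowYD 2, Finset.sum_singleton]
      simp only [Nat.add_sub_cancel]
      have hA := ih (k+1) (by omega)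
      have hB := L2 (k+1)
      have hC := ih k (by omega)
      have hr1 := invol_rec (k+3)
      have hr2 := invol_rec k
      zify at hA hB hC hr1 hr2 ⊢
      linear_combination hA + 3*hB + (k+1)*hC - hr1 - 2*hr2

/-- For `n ≥ 3`, `N(n;(3)) = (1/6)(t_n + 2·t_{n−3})`. -/
theorem stmt2 (n : ℕ) (hn : 3 ≤ n) :
    (NN n (rowYD 3) : ℚ) = (1 / 6) * ((invol n : ℚ) + 2 * invol (n - 3)) := by
  have h3 : (rowYD 3).card = 3 := rowYD_card 3
  have hNN : NN n (rowYD 3) = Ntot (n - 3) (rowYD 3) := by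
    have h := NN_eq_Ntot n (rowYD 3) (by rw [h3]; exact hn)
    rwa [h3] at h
  have h6 : 6 * Ntot (n-3) (rowYD 3) = invol ((n-3)+3) + 2 * invol (n-3) := L3 (n-3)
  rw [show (n-3)+3 = n from by omega] at h6
  rw [hNN]
  have hq : (6 : ℚ) * (Ntot (n-3) (rowYD 3) : ℚ) = (invol n : ℚ) + 2 * (invol (n-3) : ℚ) := by
    exact_mod_cast congrArg (Nat.cast : ℕ → ℚ) h6
  linarith

end Final
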